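/- Let k and m be positive integers with k even. Then T_k(m) ≡ (2^{k−1} − 1) · Σ_{p prime, p | (2m+1), (p−1) | k} ((2m+1)/p) (mod 2m+1). -/

import Mathlib

/-- `T k m = 1^k + 3^k + ⋯ + (2m-1)^k`, the sum of the k-th powers of the
first `m` odd positive integers. -/
def T (k m : ℕ) : ℕ := ∑ j ∈ Finset.range m, (2 * j + 1) ^ k

open Finset


lemma modeq_sum {α : Type*} {n : ℤ} {s : Finset α} {f g : α → ℤ}
    (h : ∀ i ∈ s, f i ≡ g i [ZMOD n]) :
    (∑ i ∈ s, f i) ≡ (∑ i ∈ s, g i) [ZMOD n] := by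
  classical
  induction s using Finset.induction with
  | empty => rfl
  | insert _ _ hx ih =>
    rw [Finset.sum_insert hx, Finset.sum_insert hx]
    exact (h _ (Finset.mem_insert_self _ _)).add
      (ih fun i hi => h i (Finset.mem_insert_of_mem hi))

lemma sum_pow_zmod (q : ℕ) [hq : Fact q.Prime] (k : ℕ) (hk : 0 < k) :
    ∑ x : ZMod q, x ^ k = if (q - 1) ∣ k then -1 else 0 := by
  classical
  have hcard : Fintype.card (ZMod q) = q := ZMod.card q
  let φ : (ZMod q)ˣ ↪ ZMod q := ⟨fun x => (x : ZMod q), fun _ _ h => Units.ext h⟩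
  have huniv : (Finset.univ.map φ) = Finset.univ \ {0} := by
    ext x
    simp only [Finset.mem_map, Finset.mem_univ, Function.Embedding.coeFn_mk, true_and,
      Finset.mem_sdiff, Finset.mem_singleton, φ]; exact isUnit_iff_ne_zero
  have h0 : (0 : ZMod q) ^ k = 0 := zero_pow hk.ne'
  have hsplit : ∑ x : ZMod q, x ^ k = ∑ x ∈ Finset.univ \ {0}, x ^ k := by
    rw [Finset.sum_sdiff_eq_sub (Finset.subset_univ _), Finset.sum_singleton, h0, sub_zero]
  rw [hsplit, ← huniv, Finset.sum_map]
  have := FiniteField.sum_pow_units (ZMod q) k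
  rw [hcard] at this
  exact this

lemma sum_range_cast_zmod (q : ℕ) [NeZero q] (f : ZMod q → ZMod q) :
    ∑ x ∈ Finset.range q, f (x : ZMod q) = ∑ y : ZMod q, f y := by
  apply Finset.sum_nbij' (fun x : ℕ => (x : ZMod q)) (fun y : ZMod q => y.val)
  · intro a _; exact Finset.mem_univ _
  · intro a _; exact Finset.mem_range.mpr (ZMod.val_lt a)
  · intro a ha; exact ZMod.val_cast_of_lt (Finset.mem_range.mp ha)
  · intro a _; exact ZMod.natCast_rightInverse a
  · intro a _; rfl

/-- Base case: power sum over `range q` mod a prime `q`. -/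
lemma base_case (q : ℕ) (hq : q.Prime) (k : ℕ) (hk : 0 < k) :
    (∑ x ∈ Finset.range q, (x : ℤ) ^ k) ≡
      (if (q - 1) ∣ k then (-1 : ℤ) else 0) [ZMOD (q : ℤ)] := by
  haveI : Fact q.Prime := ⟨hq⟩
  haveI : NeZero q := ⟨hq.pos.ne'⟩
  rw [← ZMod.intCast_eq_intCast_iff]
  push_cast
  rw [show ∑ x ∈ Finset.range q, ((x : ZMod q)) ^ k
      = ∑ x ∈ Finset.range q, (fun y : ZMod q => y ^ k) ((x : ℕ) : ZMod q) from rfl,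
    sum_range_cast_zmod q (fun y : ZMod q => y ^ k), sum_pow_zmod q k hk]



/-- Decompose a sum over `range (c * N)` into blocks. -/
lemma sum_blocks {M : Type*} [AddCommMonoid M] (f : ℕ → M) (c N : ℕ) :
    ∑ x ∈ Finset.range (c * N), f x
      = ∑ b ∈ Finset.range c, ∑ a ∈ Finset.range N, f (N * b + a) := by
  induction c with
  | zero => simp
  | succ c ih =>
    rw [Nat.succ_mul, Finset.sum_range_add, ih, Finset.sum_range_succ]
    congr 1
    apply Finset.sum_congr rfl
    intro a _
    congr 1
    ring

/-- First-order binomial expansion. -/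
lemma binom_aux (a c : ℤ) (k : ℕ) :
    ∃ r : ℤ, (a + c) ^ (k + 1) = a ^ (k + 1) + (k + 1) * a ^ k * c + c ^ 2 * r := by
  induction k with
  | zero => exact ⟨0, by ring⟩
  | succ k ih =>
    obtain ⟨r, hr⟩ := ih
    refine ⟨a * r + (k + 1) * a ^ k + c * r, ?_⟩
    have : (a + c) ^ (k + 2) = (a + c) * (a + c) ^ (k + 1) := by ring
    rw [this, hr]
    push_cast
    ring

/-- Periodicity: sum over `range (c * N)` is `c` copies mod `N`. -/
lemma sum_periodic (k c N : ℕ) :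
    (∑ x ∈ Finset.range (c * N), (x : ℤ) ^ k) ≡
      (c : ℤ) * ∑ a ∈ Finset.range N, (a : ℤ) ^ k [ZMOD (N : ℤ)] := by
  rw [sum_blocks (fun x : ℕ => (x : ℤ) ^ k) c N]
  have : (c : ℤ) * ∑ a ∈ Finset.range N, (a : ℤ) ^ k
      = ∑ _b ∈ Finset.range c, ∑ a ∈ Finset.range N, (a : ℤ) ^ k := by
    rw [Finset.sum_const, nsmul_eq_mul, Finset.card_range]
  rw [this]
  apply modeq_sum
  intro b _
  apply modeq_sum
  intro a _
  have h1 : ((N * b + a : ℕ) : ℤ) ≡ (a : ℤ) [ZMOD (N : ℤ)] := by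
    have hd : (N : ℤ) ∣ (a : ℤ) - ((N * b + a : ℕ) : ℤ) := ⟨-b, by push_cast; ring⟩
    exact Int.modEq_iff_dvd.mpr hd
  exact h1.pow k

/-- Lift: for odd prime `q`, `∑_{x < q^(e+1)} x^k ≡ q * ∑_{x < q^e} x^k [mod q^(e+1)]`. -/
lemma lift_step (q : ℕ) (hq : q.Prime) (hodd : Odd q) (k e : ℕ) (hk : 0 < k) (he : 0 < e) :
    (∑ x ∈ Finset.range (q ^ (e + 1)), (x : ℤ) ^ k) ≡
      (q : ℤ) * ∑ a ∈ Finset.range (q ^ e), (a : ℤ) ^ k [ZMOD ((q : ℤ) ^ (e + 1))] := by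
  obtain ⟨k, rfl⟩ : ∃ k', k = k' + 1 := ⟨k - 1, (Nat.succ_pred_eq_of_pos hk).symm⟩
  have hsplit : q ^ (e + 1) = q * q ^ e := by ring
  rw [hsplit, sum_blocks (fun x : ℕ => (x : ℤ) ^ (k + 1)) q (q ^ e)]
  -- Gauss: ∑_{b<q} b = q * d with q odd
  obtain ⟨d, hd⟩ : ∃ d : ℕ, q - 1 = 2 * d := by
    obtain ⟨t, ht⟩ := hodd; exact ⟨t, by omega⟩
  have hgauss : (∑ b ∈ Finset.range q, (b : ℤ)) = (q : ℤ) * d := by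
    have h2 : (∑ b ∈ Finset.range q, b) * 2 = q * (q - 1) := Finset.sum_range_id_mul_two q
    have : (∑ b ∈ Finset.range q, b) * 2 = (q * d) * 2 := by rw [h2, hd]; ring
    have h3 := Nat.eq_of_mul_eq_mul_right (by norm_num) this
    rw [← Nat.cast_sum, h3]
    push_cast
    ring
  -- termwise congruence
  have key : ∀ b ∈ Finset.range q, ∀ a ∈ Finset.range (q ^ e),
      ((q ^ e * b + a : ℕ) : ℤ) ^ (k + 1) ≡
        (a : ℤ) ^ (k + 1) + (k + 1) * (a : ℤ) ^ k * ((q : ℤ) ^ e * b)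
          [ZMOD ((q : ℤ) ^ (e + 1))] := by
    intro b _ a _
    obtain ⟨r, hr⟩ := binom_aux (a : ℤ) ((q : ℤ) ^ e * b) k
    have hcast : ((q ^ e * b + a : ℕ) : ℤ) = (a : ℤ) + (q : ℤ) ^ e * b := by push_cast; ring
    rw [hcast, hr]
    have hdvd : ((q : ℤ) ^ (e + 1)) ∣ ((q : ℤ) ^ e * b) ^ 2 * r := by
      refine Dvd.dvd.mul_right ?_ r
      have : (q : ℤ) ^ (e + 1) ∣ (q : ℤ) ^ (2 * e) := pow_dvd_pow _ (by omega)
      exact this.trans ⟨(b : ℤ) ^ 2, by ring⟩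
    calc (a : ℤ) ^ (k+1) + (↑k+1) * (a:ℤ)^k * ((q:ℤ)^e * b) + ((q:ℤ)^e * b)^2 * r
        ≡ (a : ℤ) ^ (k+1) + (↑k+1) * (a:ℤ)^k * ((q:ℤ)^e * b) + 0 [ZMOD ((q : ℤ) ^ (e + 1))] :=
          (Int.ModEq.refl _).add ((Int.modEq_zero_iff_dvd.mpr hdvd))
      _ = (a : ℤ) ^ (k+1) + (↑(k+1) : ℕ) * (a:ℤ)^k * ((q:ℤ)^e * b) := by push_cast; ring
  have step1 : (∑ b ∈ Finset.range q, ∑ a ∈ Finset.range (q ^ e),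
        ((q ^ e * b + a : ℕ) : ℤ) ^ (k + 1)) ≡
      ∑ b ∈ Finset.range q, ∑ a ∈ Finset.range (q ^ e),
        ((a : ℤ) ^ (k + 1) + ((k : ℤ) + 1) * (a : ℤ) ^ k * ((q : ℤ) ^ e * b))
        [ZMOD ((q : ℤ) ^ (e + 1))] := by
    apply modeq_sum; intro b hb; apply modeq_sum; intro a ha
    simpa using key b hb a ha
  refine step1.trans ?_
  -- now an exact computation plus divisibility of the linear term
  have hlin : ∑ b ∈ Finset.range q, ∑ a ∈ Finset.range (q ^ e),
      (((k : ℤ) + 1) * (a : ℤ) ^ k * ((q : ℤ) ^ e * b))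
      = (q : ℤ) ^ (e + 1) * (d * (((k : ℤ) + 1) * ∑ a ∈ Finset.range (q ^ e), (a : ℤ) ^ k)) := by
    have hinner : ∀ b : ℕ, ∑ a ∈ Finset.range (q ^ e),
        (((k : ℤ) + 1) * (a : ℤ) ^ k * ((q : ℤ) ^ e * b))
        = (((k : ℤ) + 1) * ((q : ℤ) ^ e * b)) * ∑ a ∈ Finset.range (q ^ e), (a : ℤ) ^ k := by
      intro b; rw [Finset.mul_sum]; exact Finset.sum_congr rfl fun a _ => by ring
    calc ∑ b ∈ Finset.range q, ∑ a ∈ Finset.range (q ^ e),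
          (((k : ℤ) + 1) * (a : ℤ) ^ k * ((q : ℤ) ^ e * b))
        = ∑ b ∈ Finset.range q, (((k : ℤ) + 1) * ((q : ℤ) ^ e * b))
            * ∑ a ∈ Finset.range (q ^ e), (a : ℤ) ^ k := Finset.sum_congr rfl fun b _ => hinner b
      _ = (∑ b ∈ Finset.range q, (((k : ℤ) + 1) * ((q : ℤ) ^ e * b)))
            * ∑ a ∈ Finset.range (q ^ e), (a : ℤ) ^ k := by rw [Finset.sum_mul]
      _ = _ := by
          have hb : ∑ b ∈ Finset.range q, (((k : ℤ) + 1) * ((q : ℤ) ^ e * (b : ℤ)))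
              = (((k : ℤ) + 1) * (q : ℤ) ^ e) * ((q : ℤ) * d) := by
            rw [← hgauss, Finset.mul_sum]
            exact Finset.sum_congr rfl fun b _ => by ring
          rw [hb]; ring
  have hsplit2 : ∑ b ∈ Finset.range q, ∑ a ∈ Finset.range (q ^ e),
      ((a : ℤ) ^ (k + 1) + ((k : ℤ) + 1) * (a : ℤ) ^ k * ((q : ℤ) ^ e * b))
      = (q : ℤ) * (∑ a ∈ Finset.range (q ^ e), (a : ℤ) ^ (k + 1))
        + (q : ℤ) ^ (e + 1) * (d * (((k : ℤ) + 1) * ∑ a ∈ Finset.range (q ^ e), (a : ℤ) ^ k)) := by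
    calc ∑ b ∈ Finset.range q, ∑ a ∈ Finset.range (q ^ e),
          ((a : ℤ) ^ (k + 1) + ((k : ℤ) + 1) * (a : ℤ) ^ k * ((q : ℤ) ^ e * b))
        = ∑ b ∈ Finset.range q, ((∑ a ∈ Finset.range (q ^ e), (a : ℤ) ^ (k + 1))
            + ∑ a ∈ Finset.range (q ^ e), ((k : ℤ) + 1) * (a : ℤ) ^ k * ((q : ℤ) ^ e * b)) :=
          Finset.sum_congr rfl fun b _ => Finset.sum_add_distrib
      _ = (∑ _b ∈ Finset.range q, ∑ a ∈ Finset.range (q ^ e), (a : ℤ) ^ (k + 1))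
            + ∑ b ∈ Finset.range q, ∑ a ∈ Finset.range (q ^ e),
              ((k : ℤ) + 1) * (a : ℤ) ^ k * ((q : ℤ) ^ e * b) := Finset.sum_add_distrib
      _ = _ := by rw [hlin, Finset.sum_const, nsmul_eq_mul, Finset.card_range]
  rw [hsplit2]
  have : (q : ℤ) * (∑ a ∈ Finset.range (q ^ e), (a : ℤ) ^ (k + 1))
      + (q : ℤ) ^ (e + 1) * (d * (((k : ℤ) + 1) * ∑ a ∈ Finset.range (q ^ e), (a : ℤ) ^ k))
      ≡ (q : ℤ) * (∑ a ∈ Finset.range (q ^ e), (a : ℤ) ^ (k + 1)) + 0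
      [ZMOD ((q : ℤ) ^ (e + 1))] :=
    (Int.ModEq.refl _).add (Int.modEq_zero_iff_dvd.mpr ⟨_, rfl⟩)
  simpa using this


/-- Power sum modulo an odd prime power. -/
lemma prime_pow_sum (q : ℕ) (hq : q.Prime) (hodd : Odd q) (k e : ℕ) (hk : 0 < k) (he : 0 < e) :
    (∑ x ∈ Finset.range (q ^ e), (x : ℤ) ^ k) ≡
      (if (q - 1) ∣ k then -(q : ℤ) ^ (e - 1) else 0) [ZMOD ((q : ℤ) ^ e)] := by
  induction e with
  | zero => omega
  | succ e ih =>
    rcases Nat.eq_zero_or_pos e with rfl | he'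
    · simpa using base_case q hq k hk
    · have h1 := lift_step q hq hodd k e hk he'
      have h2 := ih he'
      -- multiply h2 by q, upgrading the modulus
      have h3 : (q : ℤ) * (∑ x ∈ Finset.range (q ^ e), (x : ℤ) ^ k) ≡
          (q : ℤ) * (if (q - 1) ∣ k then -(q : ℤ) ^ (e - 1) else 0)
          [ZMOD ((q : ℤ) ^ (e + 1))] := by
        have hd : ((q : ℤ) ^ e) ∣ (if (q - 1) ∣ k then -(q : ℤ) ^ (e - 1) else 0)
            - (∑ x ∈ Finset.range (q ^ e), (x : ℤ) ^ k) := Int.ModEq.dvd h2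
        obtain ⟨c, hc⟩ := hd
        refine Int.modEq_iff_dvd.mpr ⟨c, ?_⟩
        rw [← mul_sub, hc]; ring
      refine (h1.trans h3).trans ?_
      have : (q : ℤ) * (if (q - 1) ∣ k then -(q : ℤ) ^ (e - 1) else 0)
          = (if (q - 1) ∣ k then -(q : ℤ) ^ (e + 1 - 1) else 0) := by
        split_ifs
        · rw [show e + 1 - 1 = (e - 1) + 1 from by omega]; ring
        · ring
      rw [this]

/-- Local version at an odd prime power. -/
lemma ms_local (n q : ℕ) (hn : Odd n) (hpos : 0 < n) (k : ℕ) (hk : 0 < k)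
    (hq : q.Prime) (hqn : q ∣ n) :
    ((q : ℤ) ^ (n.factorization q)) ∣
      (∑ x ∈ Finset.range n, (x : ℤ) ^ k)
        + ∑ p ∈ n.primeFactors.filter (fun p => (p - 1) ∣ k), ((n / p : ℕ) : ℤ) := by
  classical
  set e := n.factorization q with he
  have he1 : 0 < e := hq.factorization_pos_of_dvd hpos.ne' hqn
  have hqodd : Odd q := by
    rcases hq.eq_two_or_odd' with rfl | h
    · exact absurd (even_iff_two_dvd.mpr hqn) (Nat.not_even_iff_odd.mpr hn)
    · exact h
  -- n = c * q ^ e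
  set c := n / q ^ e with hc
  have hnc : n = c * q ^ e := by
    rw [hc, he]
    exact (Nat.div_mul_cancel (Nat.ordProj_dvd n q)).symm
  -- power sum congruence
  have hS : (∑ x ∈ Finset.range n, (x : ℤ) ^ k) ≡
      (c : ℤ) * (if (q - 1) ∣ k then -(q : ℤ) ^ (e - 1) else 0) [ZMOD ((q : ℤ) ^ e)] := by
    have h1 := sum_periodic k c (q ^ e)
    rw [← hnc] at h1
    have h1' : (∑ x ∈ Finset.range n, (x : ℤ) ^ k) ≡
        (c : ℤ) * ∑ a ∈ Finset.range (q ^ e), (a : ℤ) ^ k [ZMOD ((q : ℤ) ^ e)] := by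
      have : (((q ^ e : ℕ) : ℤ)) = (q : ℤ) ^ e := by push_cast; ring
      rwa [this] at h1
    exact h1'.trans ((prime_pow_sum q hq hqodd k e hk he1).mul_left (c : ℤ))
  -- the prime factor sum congruence
  have hterm : ∀ p ∈ n.primeFactors.filter (fun p => (p - 1) ∣ k), p ≠ q →
      ((q : ℤ) ^ e) ∣ ((n / p : ℕ) : ℤ) := by
    intro p hp hpq
    rw [Finset.mem_filter] at hp
    obtain ⟨hp1, _⟩ := hp
    have hpp : p.Prime := Nat.prime_of_mem_primeFactors hp1
    have hpn : p ∣ n := Nat.dvd_of_mem_primeFactors hp1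
    have hcop : Nat.Coprime (q ^ e) p := Nat.Coprime.pow_left e
      ((Nat.coprime_primes hq hpp).mpr (Ne.symm hpq))
    have hdvd : q ^ e ∣ (n / p) * p := by
      rw [Nat.div_mul_cancel hpn, he]
      exact Nat.ordProj_dvd n q
    have := hcop.dvd_of_dvd_mul_right hdvd
    exact_mod_cast Int.natCast_dvd_natCast.mpr this
  have hNq : (q - 1) ∣ k → ((n / q : ℕ) : ℤ) = (c : ℤ) * (q : ℤ) ^ (e - 1) := by
    intro _
    have h1 : n / q = c * q ^ (e - 1) := by
      conv_lhs => rw [hnc, show e = (e - 1) + 1 from by omega]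
      rw [pow_succ, ← mul_assoc, Nat.mul_div_cancel _ hq.pos]
    rw [h1]; push_cast; ring
  have hSig : (∑ p ∈ n.primeFactors.filter (fun p => (p - 1) ∣ k), ((n / p : ℕ) : ℤ)) ≡
      (if (q - 1) ∣ k then (c : ℤ) * (q : ℤ) ^ (e - 1) else 0) [ZMOD ((q : ℤ) ^ e)] := by
    by_cases hqk : (q - 1) ∣ k
    · have hqmem : q ∈ n.primeFactors.filter (fun p => (p - 1) ∣ k) := by
        rw [Finset.mem_filter]
        exact ⟨Nat.mem_primeFactors.mpr ⟨hq, hqn, hpos.ne'⟩, hqk⟩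
      rw [← Finset.add_sum_erase _ _ hqmem, if_pos hqk, ← hNq hqk]
      nth_rewrite 2 [show ((n / q : ℕ) : ℤ) = ((n / q : ℕ) : ℤ) + 0 from (add_zero _).symm]
      refine Int.ModEq.add_left _ ?_
      have : ∀ p ∈ (n.primeFactors.filter (fun p => (p - 1) ∣ k)).erase q,
          ((n / p : ℕ) : ℤ) ≡ 0 [ZMOD ((q : ℤ) ^ e)] := by
        intro p hp
        exact Int.modEq_zero_iff_dvd.mpr
          (hterm p (Finset.mem_of_mem_erase hp) (Finset.ne_of_mem_erase hp))
      calc (∑ p ∈ (n.primeFactors.filter (fun p => (p - 1) ∣ k)).erase q, ((n / p : ℕ) : ℤ))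
          ≡ ∑ p ∈ (n.primeFactors.filter (fun p => (p - 1) ∣ k)).erase q, (0 : ℤ)
            [ZMOD ((q : ℤ) ^ e)] := modeq_sum this
        _ = 0 := Finset.sum_const_zero
    · rw [if_neg hqk]
      have : ∀ p ∈ n.primeFactors.filter (fun p => (p - 1) ∣ k),
          ((n / p : ℕ) : ℤ) ≡ 0 [ZMOD ((q : ℤ) ^ e)] := by
        intro p hp
        refine Int.modEq_zero_iff_dvd.mpr (hterm p hp ?_)
        rintro rfl
        exact hqk (Finset.mem_filter.mp hp).2
      calc (∑ p ∈ n.primeFactors.filter (fun p => (p - 1) ∣ k), ((n / p : ℕ) : ℤ))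
          ≡ ∑ p ∈ n.primeFactors.filter (fun p => (p - 1) ∣ k), (0 : ℤ)
            [ZMOD ((q : ℤ) ^ e)] := modeq_sum this
        _ = 0 := Finset.sum_const_zero
  have := hS.add hSig
  rw [show (c : ℤ) * (if (q - 1) ∣ k then -(q : ℤ) ^ (e - 1) else 0)
      + (if (q - 1) ∣ k then (c : ℤ) * (q : ℤ) ^ (e - 1) else 0) = 0 from by
    split_ifs <;> ring] at this
  exact Int.dvd_of_emod_eq_zero (by simpa [Int.ModEq] using this)

lemma ms_global (n : ℕ) (hn : Odd n) (hpos : 0 < n) (k : ℕ) (hk : 0 < k) :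
    (n : ℤ) ∣ (∑ x ∈ Finset.range n, (x : ℤ) ^ k)
      + ∑ p ∈ n.primeFactors.filter (fun p => (p - 1) ∣ k), ((n / p : ℕ) : ℤ) := by
  classical
  set M : ℕ := (∑ x ∈ Finset.range n, x ^ k)
    + ∑ p ∈ n.primeFactors.filter (fun p => (p - 1) ∣ k), n / p with hM
  have hcast : ((M : ℕ) : ℤ) = (∑ x ∈ Finset.range n, (x : ℤ) ^ k)
      + ∑ p ∈ n.primeFactors.filter (fun p => (p - 1) ∣ k), ((n / p : ℕ) : ℤ) := by
    rw [hM]; push_cast; ring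
  rw [← hcast]
  rw [Int.natCast_dvd_natCast]
  rw [Nat.dvd_iff_prime_pow_dvd_dvd]
  intro p i pp hpi
  rcases Nat.eq_zero_or_pos i with rfl | hi
  · simp
  have pp' : p.Prime := pp
  have hpn : p ∣ n := dvd_trans (dvd_pow_self p hi.ne') hpi
  have hle : i ≤ n.factorization p :=
    (Nat.Prime.pow_dvd_iff_le_factorization pp' hpos.ne').mp hpi
  have hloc := ms_local n p hn hpos k hk pp' hpn
  rw [← hcast] at hloc
  have hloc' : p ^ (n.factorization p) ∣ M := by
    rwa [show ((p : ℤ)) ^ (n.factorization p) = (((p ^ (n.factorization p) : ℕ)) : ℤ) from by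
      push_cast; ring, Int.natCast_dvd_natCast] at hloc
  exact dvd_trans (pow_dvd_pow p hle) hloc'

lemma sum_split (k m : ℕ) (hk : 0 < k) :
    ∑ x ∈ Finset.range (2 * m + 1), (x : ℤ) ^ k
      = (∑ j ∈ Finset.range m, (2 * (j : ℤ) + 1) ^ k)
        + 2 ^ k * ∑ j ∈ Finset.range m, ((j : ℤ) + 1) ^ k := by
  induction m with
  | zero => simp [zero_pow hk.ne']
  | succ m ih =>
    rw [show 2 * (m + 1) + 1 = (2 * m + 1) + 2 from by ring, Finset.sum_range_add, ih]
    simp only [Finset.sum_range_succ, Finset.sum_range_zero]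
    push_cast
    rw [show (2 * (m : ℤ) + 1 + 1) = 2 * ((m : ℤ) + 1) from by ring, mul_pow]
    ring

lemma refl_cong (k m : ℕ) (hk : 0 < k) (heven : Even k) :
    2 * (∑ j ∈ Finset.range m, ((j : ℤ) + 1) ^ k) ≡
      ∑ x ∈ Finset.range (2 * m + 1), (x : ℤ) ^ k [ZMOD ((2 * m + 1 : ℕ) : ℤ)] := by
  have hsplit : ∑ x ∈ Finset.range (2 * m + 1), (x : ℤ) ^ k
      = (∑ x ∈ Finset.range (m + 1), (x : ℤ) ^ k)
        + ∑ j ∈ Finset.range m, ((m + 1 + j : ℕ) : ℤ) ^ k := by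
    rw [show 2 * m + 1 = (m + 1) + m from by ring, Finset.sum_range_add]
  have hfirst : ∑ x ∈ Finset.range (m + 1), (x : ℤ) ^ k
      = ∑ j ∈ Finset.range m, ((j : ℤ) + 1) ^ k := by
    rw [Finset.sum_range_succ']
    simp [zero_pow hk.ne']
  have hsecond : (∑ j ∈ Finset.range m, ((m + 1 + j : ℕ) : ℤ) ^ k) ≡
      ∑ j ∈ Finset.range m, ((j : ℤ) + 1) ^ k [ZMOD ((2 * m + 1 : ℕ) : ℤ)] := by
    have step1 : (∑ j ∈ Finset.range m, ((m + 1 + j : ℕ) : ℤ) ^ k) ≡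
        ∑ j ∈ Finset.range m, ((m - j : ℕ) : ℤ) ^ k [ZMOD ((2 * m + 1 : ℕ) : ℤ)] := by
      apply modeq_sum
      intro j hj
      have hjm : j < m := Finset.mem_range.mp hj
      have hcast : ((m - j : ℕ) : ℤ) = (m : ℤ) - j := by
        rw [Nat.cast_sub hjm.le]
      have hmod : ((m + 1 + j : ℕ) : ℤ) ≡ -((m - j : ℕ) : ℤ) [ZMOD ((2 * m + 1 : ℕ) : ℤ)] := by
        refine Int.modEq_iff_dvd.mpr ⟨-1, ?_⟩
        rw [hcast]; push_cast; ring
      have := hmod.pow k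
      rwa [heven.neg_pow] at this
    have hEq : (∑ j ∈ Finset.range m, ((m - j : ℕ) : ℤ) ^ k)
        = ∑ j ∈ Finset.range m, ((j : ℤ) + 1) ^ k := by
      calc ∑ j ∈ Finset.range m, ((m - j : ℕ) : ℤ) ^ k
          = ∑ j ∈ Finset.range m, ((m - 1 - j + 1 : ℕ) : ℤ) ^ k := by
            refine Finset.sum_congr rfl fun j hj => ?_
            have := Finset.mem_range.mp hj
            congr 2
            omega
        _ = ∑ j ∈ Finset.range m, ((j + 1 : ℕ) : ℤ) ^ k :=
            Finset.sum_range_reflect (fun i : ℕ => ((i + 1 : ℕ) : ℤ) ^ k) m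
        _ = ∑ j ∈ Finset.range m, ((j : ℤ) + 1) ^ k := by
            refine Finset.sum_congr rfl fun j _ => by push_cast; ring
    rw [hEq] at step1
    exact step1
  rw [hsplit, hfirst]
  have : 2 * (∑ j ∈ Finset.range m, ((j : ℤ) + 1) ^ k)
      = (∑ j ∈ Finset.range m, ((j : ℤ) + 1) ^ k)
        + ∑ j ∈ Finset.range m, ((j : ℤ) + 1) ^ k := by ring
  rw [this]
  exact (Int.ModEq.refl _).add hsecond.symm

theorem stmt_7 (k m : ℕ) (hk : 0 < k) (hm : 0 < m) (heven : Even k) :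
    (T k m : ℤ) ≡
      (2 ^ (k - 1) - 1) *
        ∑ p ∈ (2 * m + 1).primeFactors.filter (fun p => (p - 1) ∣ k),
          (((2 * m + 1) / p : ℕ) : ℤ)
      [ZMOD ((2 * m + 1 : ℕ) : ℤ)] := by
  set n : ℕ := 2 * m + 1 with hn
  have hcastT : (T k m : ℤ) = ∑ j ∈ Finset.range m, (2 * (j : ℤ) + 1) ^ k := by
    rw [T]; push_cast; ring
  set S : ℤ := ∑ x ∈ Finset.range n, (x : ℤ) ^ k with hS
  set P : ℤ := ∑ j ∈ Finset.range m, ((j : ℤ) + 1) ^ k with hP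
  set Sig : ℤ := ∑ p ∈ n.primeFactors.filter (fun p => (p - 1) ∣ k), ((n / p : ℕ) : ℤ)
    with hSig
  have hss := sum_split k m hk
  rw [← hn] at hss
  have hTid : (T k m : ℤ) = S - 2 ^ k * P := by
    rw [hcastT, hS, hP, hss]
    ring
  have h2P : 2 * P ≡ S [ZMOD (n : ℤ)] := by
    have := refl_cong k m hk heven
    rw [← hn] at this
    exact this
  have hG : (n : ℤ) ∣ S + Sig := ms_global n ⟨m, by omega⟩ (by omega) k hk
  have h1 : 2 * (T k m : ℤ) ≡ 2 * S - 2 ^ k * S [ZMOD (n : ℤ)] := by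
    rw [show 2 * (T k m : ℤ) = 2 * S - 2 ^ k * (2 * P) from by rw [hTid]; ring]
    exact (Int.ModEq.refl _).sub (h2P.mul_left _)
  have h2 : 2 * S - 2 ^ k * S ≡ (2 ^ k - 2) * Sig [ZMOD (n : ℤ)] := by
    have h0 : S + Sig ≡ 0 [ZMOD (n : ℤ)] := Int.modEq_zero_iff_dvd.mpr hG
    have hmul := h0.mul_left ((2 : ℤ) ^ k - 2)
    rw [mul_zero] at hmul
    calc 2 * S - 2 ^ k * S = (2 ^ k - 2) * Sig - (2 ^ k - 2) * (S + Sig) := by ring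
      _ ≡ (2 ^ k - 2) * Sig - 0 [ZMOD (n : ℤ)] := (Int.ModEq.refl _).sub hmul
      _ = (2 ^ k - 2) * Sig := by ring
  have h3 : 2 * (T k m : ℤ) ≡ 2 * ((2 ^ (k - 1) - 1) * Sig) [ZMOD (n : ℤ)] := by
    refine (h1.trans h2).trans ?_
    rw [show (2 : ℤ) * ((2 ^ (k - 1) - 1) * Sig) = (2 * 2 ^ (k - 1) - 2) * Sig from by ring,
      show (2 : ℤ) * 2 ^ (k - 1) = 2 ^ k from by
        rw [← pow_succ']; congr 1; omega]
  have hgcd : Int.gcd (n : ℤ) 2 = 1 := by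
    have : Nat.gcd n 2 = 1 := Nat.coprime_two_right.mpr ⟨m, by omega⟩
    simpa [Int.gcd] using this
  have hfin := Int.ModEq.cancel_left_div_gcd
    (show (0 : ℤ) < (n : ℤ) from by exact_mod_cast Nat.succ_pos _) h3
  rwa [hgcd, Nat.cast_one, Int.ediv_one] at hfin
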